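/- Let S ⊂ ℝⁿ be a nonempty compact convex set with more than one element, with minimal bounding sphere of radius r > 0 centered at −a ∈ ℝⁿ, and let σ(x) = max{p·x : p ∈ S}. Then for every λ > 0, the upper transform C^u_λ(σ) is differentiable at 0 with ∇C^u_λ(σ)(0) = −a. -/

import Mathlib

open Filter Metric Set
open scoped Topology RealInnerProductSpace

/-- The convex envelope of `g`: pointwise supremum of convex functions below `g`. -/
noncomputable def convEnv {E : Type*} [NormedAddCommGroup E] [NormedSpace ℝ E]
    (g : E → ℝ) (x : E) : ℝ :=
  sSup {y : ℝ | ∃ h : E → ℝ, ConvexOn ℝ Set.univ h ∧ (∀ z, h z ≤ g z) ∧ y = h x}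

/-- Upper compensated convex transform. -/
noncomputable def upperT {E : Type*} [NormedAddCommGroup E] [NormedSpace ℝ E]
    (lam : ℝ) (g : E → ℝ) (x : E) : ℝ :=
  lam * ‖x‖ ^ 2 - convEnv (fun y => lam * ‖y‖ ^ 2 - g y) x

/-- Lower compensated convex transform. -/
noncomputable def lowerT {E : Type*} [NormedAddCommGroup E] [NormedSpace ℝ E]
    (lam : ℝ) (g : E → ℝ) (x : E) : ℝ :=
  convEnv (fun y => g y + lam * ‖y‖ ^ 2) x - lam * ‖x‖ ^ 2

/-- `(c, r)` is a minimal bounding ball of `K`. -/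
def IsMinBall {E : Type*} [NormedAddCommGroup E] (K : Set E) (c : E) (r : ℝ) : Prop :=
  0 ≤ r ∧ K ⊆ Metric.closedBall c r ∧ ∀ c' r', K ⊆ Metric.closedBall c' r' → r ≤ r'

set_option linter.unusedSectionVars false

section Aux

variable {E : Type*} [NormedAddCommGroup E] [InnerProductSpace ℝ E] [CompleteSpace E]

lemma center_mem_closure_convexHull (S : Set E) (hS : S.Nonempty) (hSc : IsCompact S)
    (a : E) (r : ℝ) (hr : 0 < r) (hmin : IsMinBall S (-a) r) :
    -a ∈ closure (convexHull ℝ (S ∩ sphere (-a) r)) := by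
  obtain ⟨hr0, hball, hopt⟩ := hmin
  -- T nonempty
  obtain ⟨q, hqS, hq⟩ := hSc.exists_isMaxOn hS
    ((continuous_id.dist continuous_const).continuousOn : ContinuousOn (fun p => dist p (-a)) S)
  have hqr : dist q (-a) = r := le_antisymm (hball hqS) (hopt (-a) _ (fun p hp => hq hp))
  have hqT : q ∈ S ∩ sphere (-a) r := ⟨hqS, hqr⟩
  by_contra hc
  obtain ⟨f, u, hfa, hfb⟩ := geometric_hahn_banach_point_closed
    ((convex_convexHull ℝ (S ∩ sphere (-a) r)).closure) isClosed_closure hc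
  set v := (InnerProductSpace.toDual ℝ E).symm f with hvdef
  have hv : ∀ z, ⟪v, z⟫ = f z := fun z => InnerProductSpace.toDual_symm_apply
  set ε := u - f (-a) with hε
  have hε0 : 0 < ε := by rw [hε]; linarith
  have hT : ∀ p ∈ S ∩ sphere (-a) r, ε ≤ ⟪v, p + a⟫ := by
    intro p hp
    have h1 : u < f p := hfb p (subset_closure (subset_convexHull ℝ _ hp))
    have h2 : ⟪v, p + a⟫ = f p - f (-a) := by
      rw [hv, show p + a = p - (-a) by abel, map_sub]
    rw [h2, hε]; linarith
  have hnv : 0 < ‖v‖ := by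
    rcases eq_or_ne v 0 with h0 | h0
    · exfalso
      have h1 := hT q hqT
      rw [h0] at h1
      simp only [inner_zero_left] at h1
      linarith
    · exact norm_pos_iff.2 h0
  have hcont : Continuous fun p : E => ⟪v, p + a⟫ :=
    continuous_const.inner (continuous_id.add continuous_const)
  -- bound away from sphere on the "bad" set
  have hM : ∃ M, 0 ≤ M ∧ M < r ∧ ∀ p ∈ S, ⟪v, p + a⟫ ≤ ε/2 → dist p (-a) ≤ M := by
    set B := S ∩ {p : E | ⟪v, p + a⟫ ≤ ε/2} with hBdef
    have hBc : IsCompact B := hSc.inter_right (isClosed_le hcont continuous_const)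
    rcases B.eq_empty_or_nonempty with hBe | hBne
    · refine ⟨0, le_refl _, hr, ?_⟩
      intro p hp hple
      exfalso
      have : p ∈ B := ⟨hp, hple⟩
      rw [hBe] at this; exact this
    · obtain ⟨q₁, hq₁B, hq₁⟩ := hBc.exists_isMaxOn hBne
        ((continuous_id.dist continuous_const).continuousOn :
          ContinuousOn (fun p => dist p (-a)) B)
      refine ⟨dist q₁ (-a), dist_nonneg, ?_, ?_⟩
      · rcases lt_or_eq_of_le (show dist q₁ (-a) ≤ r from hball hq₁B.1) with h | h
        · exact h
        · exfalso
          have : q₁ ∈ S ∩ sphere (-a) r := ⟨hq₁B.1, h⟩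
          have h1 := hT q₁ this
          have h2 := hq₁B.2
          simp only [mem_setOf_eq] at h2
          linarith
      · intro p hp hple
        exact hq₁ (⟨hp, hple⟩ : p ∈ B)
  obtain ⟨M, hM0, hMr, hMp⟩ := hM
  set t : ℝ := min (ε / (2 * ‖v‖ ^ 2)) ((r - M) / (2 * ‖v‖)) with htdef
  have ht0 : 0 < t := by
    apply lt_min
    · positivity
    · apply div_pos (by linarith) (by positivity)
  set c : E := -a + t • v with hcdef
  have key : ∀ p ∈ S, dist p c < r := by
    intro p hp
    by_cases hcase : ⟪v, p + a⟫ ≤ ε/2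
    · have h1 : dist p (-a) ≤ M := hMp p hp hcase
      have h2 : dist p c ≤ dist p (-a) + dist (-a) c := dist_triangle _ _ _
      have h3 : dist (-a) c = t * ‖v‖ := by
        rw [hcdef, dist_eq_norm]
        simp [norm_smul, abs_of_pos ht0]
      have h4 : t * ‖v‖ ≤ (r - M) / 2 := by
        have : t ≤ (r - M) / (2 * ‖v‖) := min_le_right _ _
        calc t * ‖v‖ ≤ (r - M) / (2 * ‖v‖) * ‖v‖ := by
              apply mul_le_mul_of_nonneg_right this (le_of_lt hnv)
          _ = (r - M) / 2 := by field_simp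
      linarith
    · push_neg at hcase
      have hra : ‖p + a‖ ≤ r := by
        have := hball hp
        rw [mem_closedBall, dist_eq_norm, sub_neg_eq_add] at this
        exact this
      have hd : dist p c ^ 2 = ‖p + a‖ ^ 2 - 2 * t * ⟪v, p + a⟫ + t ^ 2 * ‖v‖ ^ 2 := by
        rw [dist_eq_norm, hcdef, show p - (-a + t • v) = (p + a) - t • v by abel,
          norm_sub_sq_real, real_inner_smul_right, norm_smul]
        rw [real_inner_comm]
        rw [Real.norm_eq_abs, abs_of_pos ht0]
        ring
      have h5 : t * ‖v‖ ^ 2 ≤ ε / 2 := by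
        have : t ≤ ε / (2 * ‖v‖ ^ 2) := min_le_left _ _
        calc t * ‖v‖ ^ 2 ≤ ε / (2 * ‖v‖ ^ 2) * ‖v‖ ^ 2 := by
              apply mul_le_mul_of_nonneg_right this (by positivity)
          _ = ε / 2 := by field_simp
      have h6 : dist p c ^ 2 < r ^ 2 := by
        rw [hd]
        have h7 : ‖p + a‖ ^ 2 ≤ r ^ 2 := by nlinarith [norm_nonneg (p + a)]
        nlinarith
      nlinarith [dist_nonneg (x := p) (y := c)]
  obtain ⟨p₁, hp₁S, hp₁⟩ := hSc.exists_isMaxOn hS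
    ((continuous_id.dist continuous_const).continuousOn :
      ContinuousOn (fun p => dist p c) S)
  have := hopt c (dist p₁ c) (fun p hp => hp₁ hp)
  have := key p₁ hp₁S
  linarith

lemma key_upper (S : Set E) (hS : S.Nonempty) (hSc : IsCompact S)
    (a : E) (r : ℝ) (hr : 0 < r) (hmin : IsMinBall S (-a) r)
    (lam : ℝ) (hlam : 0 < lam)
    (h : E → ℝ) (hcv : ConvexOn ℝ Set.univ h)
    (hle : ∀ z, h z ≤ lam * ‖z‖ ^ 2 - sSup {t : ℝ | ∃ p ∈ S, t = ⟪p, z⟫}) (x : E) :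
    h x ≤ ⟪a, x⟫ - r ^ 2 / (4 * lam) + lam * ‖x‖ ^ 2 := by
  have hσ : ∀ z : E, ∀ p ∈ S, ⟪p, z⟫ ≤ sSup {t : ℝ | ∃ p ∈ S, t = ⟪p, z⟫} := by
    intro z p hp
    apply le_csSup
    · have himg : {t : ℝ | ∃ p ∈ S, t = ⟪p, z⟫} = (fun p => ⟪p, z⟫) '' S := by
        ext t; simp [eq_comm]
      rw [himg]
      exact ((hSc.image (continuous_id.inner continuous_const)).bddAbove)
    · exact ⟨p, hp, rfl⟩
  set Φ : E → ℝ := fun b =>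
    ⟪a, x - (2 * lam)⁻¹ • (b + a)⟫ + lam * ‖x - (2 * lam)⁻¹ • (b + a)‖ ^ 2
      + (4 * lam)⁻¹ * (2 * ⟪a, a + b⟫ - r ^ 2) with hΦdef
  have hΦc : Continuous Φ := by
    have c1 : Continuous fun b : E => x - (2 * lam)⁻¹ • (b + a) :=
      continuous_const.sub ((continuous_id.add continuous_const).const_smul _)
    rw [hΦdef]
    exact ((continuous_const.inner c1).add (continuous_const.mul (c1.norm.pow 2))).add
      (continuous_const.mul ((continuous_const.mul
        (continuous_const.inner (continuous_const.add continuous_id))).sub continuous_const))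
  have hΦb : ∀ b ∈ convexHull ℝ (S ∩ sphere (-a) r), h x ≤ Φ b := by
    intro b hb
    rw [convexHull_eq] at hb
    obtain ⟨ι, s, w, z, hw0, hw1, hzT, hcm⟩ := hb
    have hbsum : ∑ i ∈ s, w i • z i = b := by
      rw [← hcm, Finset.centerMass_eq_of_sum_1 _ _ hw1]
    set d : E := x - (2 * lam)⁻¹ • (b + a) with hd
    set ζ : ι → E := fun i => (2 * lam)⁻¹ • (z i + a) + d with hζ
    have hsum : ∑ i ∈ s, w i • ζ i = x := by
      have e1 : ∑ i ∈ s, w i • ζ i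
          = (2 * lam)⁻¹ • (∑ i ∈ s, w i • (z i + a)) + (∑ i ∈ s, w i) • d := by
        rw [Finset.smul_sum, Finset.sum_smul]
        rw [← Finset.sum_add_distrib]
        apply Finset.sum_congr rfl
        intro i hi
        rw [hζ]
        simp only [smul_add, smul_comm (w i) ((2*lam)⁻¹)]
      rw [e1]
      have e2 : ∑ i ∈ s, w i • (z i + a) = b + a := by
        simp only [smul_add]
        rw [Finset.sum_add_distrib, hbsum, ← Finset.sum_smul, hw1, one_smul]
      rw [e2, hw1, one_smul, hd]
      abel
    have hx : h x ≤ ∑ i ∈ s, w i * h (ζ i) := by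
      have := hcv.map_sum_le hw0 hw1 (fun i _ => mem_univ (ζ i))
      rw [hsum] at this
      simpa [smul_eq_mul] using this
    have hterm : ∀ i ∈ s, h (ζ i) ≤ lam * ‖ζ i‖ ^ 2 - ⟪z i, ζ i⟫ := by
      intro i hi
      have h1 := hle (ζ i)
      have h2 := hσ (ζ i) (z i) (hzT i hi).1
      linarith
    have hident : ∀ i ∈ s, lam * ‖ζ i‖ ^ 2 - ⟪z i, ζ i⟫
        = ⟪a, d⟫ + lam * ‖d‖ ^ 2 + (4 * lam)⁻¹ * (2 * ⟪a, a + z i⟫ - r ^ 2) := by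
      intro i hi
      have hsph : r ^ 2 = ‖z i‖ ^ 2 + 2 * ⟪z i, a⟫ + ‖a‖ ^ 2 := by
        have h1 : dist (z i) (-a) = r := (hzT i hi).2
        rw [dist_eq_norm, sub_neg_eq_add] at h1
        rw [← h1, norm_add_sq_real]
      have hζi : ζ i = (2 * lam)⁻¹ • (z i + a) + d := rfl
      rw [hζi, norm_add_sq_real, inner_add_right, norm_smul, real_inner_smul_left,
        real_inner_smul_right, inner_add_left, inner_add_right, inner_add_right,
        real_inner_self_eq_norm_sq, real_inner_comm a (z i), Real.norm_eq_abs,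
        abs_of_pos (by positivity : (0:ℝ) < (2*lam)⁻¹), mul_pow, norm_add_sq_real,
        real_inner_self_eq_norm_sq, hsph]
      field_simp
      linear_combination (-16) * real_inner_comm (z i) a
    set K : ℝ := ⟪a, d⟫ + lam * ‖d‖ ^ 2 + (4 * lam)⁻¹ * (2 * ‖a‖ ^ 2 - r ^ 2) with hK
    have hab : ⟪a, b⟫ = ∑ i ∈ s, w i * ⟪a, z i⟫ := by
      rw [← hbsum, inner_sum]
      simp [real_inner_smul_right]
    have hsum2 : ∑ i ∈ s, w i * (lam * ‖ζ i‖ ^ 2 - ⟪z i, ζ i⟫) = Φ b := by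
      calc ∑ i ∈ s, w i * (lam * ‖ζ i‖ ^ 2 - ⟪z i, ζ i⟫)
          = ∑ i ∈ s, (w i * K + ((4 * lam)⁻¹ * 2) * (w i * ⟪a, z i⟫)) := by
            apply Finset.sum_congr rfl
            intro i hi
            rw [hident i hi, inner_add_right, real_inner_self_eq_norm_sq, hK]
            ring
        _ = (∑ i ∈ s, w i) * K + ((4 * lam)⁻¹ * 2) * ∑ i ∈ s, w i * ⟪a, z i⟫ := by
            rw [Finset.sum_add_distrib, ← Finset.sum_mul, ← Finset.mul_sum]
        _ = Φ b := by
            rw [hw1, one_mul, ← hab, hΦdef, hK]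
            simp only [← hd]
            rw [inner_add_right, real_inner_self_eq_norm_sq]
            ring
    calc h x ≤ ∑ i ∈ s, w i * h (ζ i) := hx
      _ ≤ ∑ i ∈ s, w i * (lam * ‖ζ i‖ ^ 2 - ⟪z i, ζ i⟫) := by
          apply Finset.sum_le_sum
          intro i hi
          exact mul_le_mul_of_nonneg_left (hterm i hi) (hw0 i hi)
      _ = Φ b := hsum2
  have hcl := center_mem_closure_convexHull S hS hSc a r hr hmin
  have hne : (𝓝[convexHull ℝ (S ∩ sphere (-a) r)] (-a)).NeBot :=
    mem_closure_iff_nhdsWithin_neBot.1 hcl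
  have hev : ∀ᶠ b in 𝓝[convexHull ℝ (S ∩ sphere (-a) r)] (-a), h x ≤ Φ b :=
    eventually_nhdsWithin_of_forall hΦb
  have htend : Tendsto Φ (𝓝[convexHull ℝ (S ∩ sphere (-a) r)] (-a)) (𝓝 (Φ (-a))) :=
    (hΦc.tendsto _).mono_left nhdsWithin_le_nhds
  have hfin : h x ≤ Φ (-a) := ge_of_tendsto htend hev
  have hΦa : Φ (-a) = ⟪a, x⟫ - r ^ 2 / (4 * lam) + lam * ‖x‖ ^ 2 := by
    rw [hΦdef]
    simp only [neg_add_cancel, add_neg_cancel, smul_zero, sub_zero, inner_zero_right, mul_zero,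
      zero_sub]
    field_simp
    ring
  exact le_of_le_of_eq hfin hΦa


lemma lin_le_g (S : Set E) (hS : S.Nonempty)
    (a : E) (r : ℝ) (hr : 0 < r) (hball : S ⊆ Metric.closedBall (-a) r)
    (lam : ℝ) (hlam : 0 < lam) (z : E) :
    ⟪a, z⟫ - r ^ 2 / (4 * lam) ≤ lam * ‖z‖ ^ 2 - sSup {t : ℝ | ∃ p ∈ S, t = ⟪p, z⟫} := by
  obtain ⟨p₀, hp₀⟩ := hS
  have hne : (⟪p₀, z⟫ : ℝ) ∈ {t : ℝ | ∃ p ∈ S, t = ⟪p, z⟫} := ⟨p₀, hp₀, rfl⟩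
  have hsup : sSup {t : ℝ | ∃ p ∈ S, t = ⟪p, z⟫} ≤ lam * ‖z‖ ^ 2 - ⟪a, z⟫ + r ^ 2 / (4 * lam) := by
    apply csSup_le ⟨_, hne⟩
    rintro t ⟨p, hp, rfl⟩
    have h1 : ⟪p, z⟫ + ⟪a, z⟫ = ⟪p + a, z⟫ := (inner_add_left p a z).symm
    have h2 : ⟪p + a, z⟫ ≤ ‖p + a‖ * ‖z‖ := real_inner_le_norm _ _
    have h3 : ‖p + a‖ ≤ r := by
      have := hball hp
      rwa [mem_closedBall, dist_eq_norm, sub_neg_eq_add] at this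
    have h4 : ‖p + a‖ * ‖z‖ ≤ r * ‖z‖ := mul_le_mul_of_nonneg_right h3 (norm_nonneg z)
    have h5 : r * ‖z‖ ≤ lam * ‖z‖ ^ 2 + r ^ 2 / (4 * lam) := by
      rw [← sub_nonneg]
      have h6 : lam * ‖z‖ ^ 2 + r ^ 2 / (4 * lam) - r * ‖z‖
          = (2 * lam * ‖z‖ - r) ^ 2 / (4 * lam) := by
        field_simp
        ring
      rw [h6]
      positivity
    linarith
  linarith

lemma lin_convexOn (a : E) (C : ℝ) :
    ConvexOn ℝ Set.univ (fun z : E => ⟪a, z⟫ - C) := by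
  refine ⟨convex_univ, fun p _ q _ s t hs ht hst => le_of_eq ?_⟩
  simp only [inner_add_right, real_inner_smul_right, smul_eq_mul]
  linear_combination C * hst

end Aux

theorem stmt_10 {n : ℕ} (S : Set (EuclideanSpace ℝ (Fin n))) (hS : S.Nonempty)
    (hSc : IsCompact S) (hScv : Convex ℝ S)
    (hS2 : ∃ p ∈ S, ∃ q ∈ S, p ≠ q)
    (a : EuclideanSpace ℝ (Fin n)) (r : ℝ) (hr : 0 < r)
    (hmin : IsMinBall S (-a) r) (lam : ℝ) (hlam : 0 < lam) :
    HasGradientAt (upperT lam (fun x => sSup {t : ℝ | ∃ p ∈ S, t = ⟪p, x⟫})) (-a) 0 := by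
  set σ : EuclideanSpace ℝ (Fin n) → ℝ := fun x => sSup {t : ℝ | ∃ p ∈ S, t = ⟪p, x⟫} with hσ
  set G : EuclideanSpace ℝ (Fin n) → ℝ := fun y => lam * ‖y‖ ^ 2 - σ y with hG
  set L : EuclideanSpace ℝ (Fin n) → ℝ := fun z => ⟪a, z⟫ - r ^ 2 / (4 * lam) with hL
  have hLle : ∀ z, L z ≤ G z := fun z => lin_le_g S hS a r hr hmin.2.1 lam hlam z
  have hLcv : ConvexOn ℝ Set.univ L := lin_convexOn a _
  have hlow : ∀ x, L x ≤ convEnv G x := by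
    intro x
    apply le_csSup
    · refine ⟨G x, ?_⟩
      rintro y ⟨h, _, hle, rfl⟩
      exact hle x
    · exact ⟨L, hLcv, hLle, rfl⟩
  have hhigh : ∀ x, convEnv G x ≤ L x + lam * ‖x‖ ^ 2 := by
    intro x
    have hmem : L x ∈ {y : ℝ | ∃ h : EuclideanSpace ℝ (Fin n) → ℝ,
        ConvexOn ℝ Set.univ h ∧ (∀ z, h z ≤ G z) ∧ y = h x} := ⟨L, hLcv, hLle, rfl⟩
    apply csSup_le ⟨_, hmem⟩
    rintro y ⟨h, hcv, hle, rfl⟩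
    have := key_upper S hS hSc a r hr hmin lam hlam h hcv hle x
    rw [hL]
    linarith
  have henv0 : convEnv G 0 = -(r ^ 2 / (4 * lam)) := by
    have h1 := hlow 0
    have h2 := hhigh 0
    rw [hL] at h1 h2
    simp only [inner_zero_right, norm_zero, zero_pow, mul_zero, add_zero, zero_sub] at h1 h2
    · linarith
  have hF : ∀ y : EuclideanSpace ℝ (Fin n), upperT lam σ y = lam * ‖y‖ ^ 2 - convEnv G y := fun y => rfl
  rw [hasGradientAt_iff_isLittleO, Asymptotics.isLittleO_iff]
  intro c hc
  filter_upwards [Metric.ball_mem_nhds (0 : EuclideanSpace ℝ (Fin n)) (show (0:ℝ) < c / lam by positivity)] with x hx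
  rw [mem_ball, dist_zero_right] at hx
  have hb : ‖upperT lam σ x - upperT lam σ 0 - ⟪-a, x - 0⟫‖ ≤ lam * ‖x‖ ^ 2 := by
    rw [sub_zero, hF x, hF 0, henv0]
    have h1 := hlow x
    have h2 := hhigh x
    rw [hL] at h1 h2
    rw [Real.norm_eq_abs, abs_le]
    have hneg : ⟪-a, x⟫ = -⟪a, x⟫ := by
      rw [inner_neg_left]
    constructor <;> · simp only [norm_zero, zero_pow, mul_zero, hneg]; first | linarith | nlinarith
  calc ‖upperT lam σ x - upperT lam σ 0 - ⟪-a, x - 0⟫‖ ≤ lam * ‖x‖ ^ 2 := hb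
    _ = (lam * ‖x‖) * ‖x‖ := by ring
    _ ≤ c * ‖x - 0‖ := by
        rw [sub_zero]
        apply mul_le_mul_of_nonneg_right _ (norm_nonneg x)
        rw [lt_div_iff₀ hlam] at hx
        linarith
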